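/- arXiv:1310.8025 — 3 statements merged into one kernel-verified Lean document; each statement's English description precedes it below -/
import Mathlib

section
/- Let k ≥ 1 and λ a positive integer. Define the Boole polynomials of order k, Bl_n^{(k)}(x|λ), by ∑_{n≥0} 2^k Bl_n^{(k)}(x|λ) t^n/n! = (2/(1+(1+t)^λ))^k (1+t)^x. Then for every m ≥ 0, ∑_{n=0}^{m} Bl_n^{(k)}(x|λ) S₂(m,n) = (λ^m / 2^k) E_m^{(k)}(x/λ), where E_m^{(k)} are the Euler polynomials of order k. -/
open Finset PowerSeries Polynomial

/-- Stirling numbers of the second kind. -/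
def stirling2 : ℕ → ℕ → ℕ
  | 0, 0 => 1
  | 0, _ + 1 => 0
  | _ + 1, 0 => 0
  | n + 1, k + 1 => (k + 1) * stirling2 n (k + 1) + stirling2 n k

/-- Unsigned Stirling numbers of the first kind. -/
def stirling1 : ℕ → ℕ → ℕ
  | 0, 0 => 1
  | 0, _ + 1 => 0
  | _ + 1, 0 => 0
  | n + 1, k + 1 => n * stirling1 n (k + 1) + stirling1 n k

/-- Signed Stirling numbers of the first kind. -/
def s1 (n l : ℕ) : ℚ := (-1) ^ (n - l) * (stirling1 n l : ℚ)

/-- The exponential generating function `∑ a n * t^n / n!` as a power series over `ℚ`. -/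
noncomputable def egf (a : ℕ → ℚ) : PowerSeries ℚ :=
  PowerSeries.mk fun n => a n / (Nat.factorial n : ℚ)

/-- The binomial series `(1+t)^x = ∑ (x)_n t^n / n!` for `x : ℚ`. -/
noncomputable def onePlusTPow (x : ℚ) : PowerSeries ℚ :=
  egf fun n => ∏ i ∈ Finset.range n, (x - i)

/-- `e^{xt}` as a power series over `ℚ`. -/
noncomputable def expXT (x : ℚ) : PowerSeries ℚ := egf fun n => x ^ n

noncomputable def Esub : PowerSeries ℚ := PowerSeries.exp ℚ - 1

lemma constantCoeff_Esub : PowerSeries.constantCoeff Esub = 0 := by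
  simp [Esub]

lemma coeff_Esub_pow_vanish {m n : ℕ} (h : m < n) : PowerSeries.coeff m (Esub ^ n) = 0 := by
  have : (PowerSeries.X : PowerSeries ℚ) ^ n ∣ Esub ^ n :=
    pow_dvd_pow_of_dvd (PowerSeries.X_dvd_iff.mpr constantCoeff_Esub) n
  exact PowerSeries.X_pow_dvd_iff.mp this m h

noncomputable def substE (f : PowerSeries ℚ) : PowerSeries ℚ :=
  PowerSeries.mk fun m =>
    PowerSeries.coeff m (Polynomial.eval₂ (PowerSeries.C (R := ℚ)) Esub (PowerSeries.trunc (m + 1) f))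

lemma coeff_substE (f : PowerSeries ℚ) (m : ℕ) :
    PowerSeries.coeff m (substE f) =
      ∑ n ∈ range (m + 1), PowerSeries.coeff n f * PowerSeries.coeff m (Esub ^ n) := by
  rw [substE, PowerSeries.coeff_mk, PowerSeries.eval₂_trunc_eq_sum_range, map_sum]
  exact Finset.sum_congr rfl fun n _ => by rw [PowerSeries.coeff_C_mul]

lemma coeff_eval₂_poly (p : Polynomial ℚ) (m : ℕ) :
    PowerSeries.coeff m (p.eval₂ (PowerSeries.C (R := ℚ)) Esub) =
      ∑ n ∈ range (m + 1), p.coeff n * PowerSeries.coeff m (Esub ^ n) := by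
  have hd : p.natDegree < max (p.natDegree + 1) (m + 1) :=
    lt_of_lt_of_le (Nat.lt_succ_self _) (le_max_left _ _)
  rw [Polynomial.eval₂_eq_sum_range' _ hd, map_sum]
  rw [← Finset.sum_subset (Finset.range_subset_range.mpr (le_max_right (p.natDegree + 1) (m + 1)))]
  · exact Finset.sum_congr rfl fun n _ => by rw [PowerSeries.coeff_C_mul]
  · intro n hn hn2
    simp only [mem_range] at hn hn2
    rw [PowerSeries.coeff_C_mul, coeff_Esub_pow_vanish (by omega), mul_zero]

lemma substE_add (f g : PowerSeries ℚ) : substE (f + g) = substE f + substE g := by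
  ext m
  simp only [coeff_substE, map_add, add_mul, Finset.sum_add_distrib]

lemma substE_zero : substE 0 = 0 := by
  ext m
  simp [coeff_substE]

lemma substE_one : substE 1 = 1 := by
  ext m
  rw [coeff_substE, Finset.sum_eq_single 0]
  · simp
  · intro n hn h0
    rw [PowerSeries.coeff_one, if_neg h0, zero_mul]
  · intro h
    simp at h

lemma substE_mul (f g : PowerSeries ℚ) : substE (f * g) = substE f * substE g := by
  ext m
  have key : ∀ h : PowerSeries ℚ, ∀ a, a ≤ m →
      PowerSeries.coeff a (substE h) =
        PowerSeries.coeff a ((PowerSeries.trunc (m + 1) h).eval₂ (PowerSeries.C (R := ℚ)) Esub) := by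
    intro h a ha
    rw [coeff_substE, coeff_eval₂_poly]
    refine Finset.sum_congr rfl fun n hn => ?_
    simp only [mem_range] at hn
    rw [PowerSeries.coeff_trunc, if_pos (by omega)]
  calc PowerSeries.coeff m (substE (f * g))
      = ∑ n ∈ range (m + 1),
          (PowerSeries.trunc (m+1) f * PowerSeries.trunc (m+1) g : Polynomial ℚ).coeff n *
            PowerSeries.coeff m (Esub ^ n) := by
        rw [coeff_substE]
        refine Finset.sum_congr rfl fun n hn => ?_
        simp only [mem_range] at hn
        congr 1
        have h2 := congrArg (fun q : Polynomial ℚ => q.coeff n)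
          (PowerSeries.trunc_trunc_mul_trunc (n := m + 1) f g)
        simp only [PowerSeries.coeff_trunc, if_pos (show n < m + 1 by omega)] at h2
        rw [← h2, ← Polynomial.coe_mul, Polynomial.coeff_coe]
    _ = PowerSeries.coeff m
          (((PowerSeries.trunc (m+1) f * PowerSeries.trunc (m+1) g : Polynomial ℚ)).eval₂
            (PowerSeries.C (R := ℚ)) Esub) := (coeff_eval₂_poly _ m).symm
    _ = PowerSeries.coeff m
          ((PowerSeries.trunc (m+1) f).eval₂ (PowerSeries.C (R := ℚ)) Esub *
            (PowerSeries.trunc (m+1) g).eval₂ (PowerSeries.C (R := ℚ)) Esub) := by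
        rw [Polynomial.eval₂_mul]
    _ = PowerSeries.coeff m (substE f * substE g) := by
        rw [PowerSeries.coeff_mul, PowerSeries.coeff_mul]
        refine Finset.sum_congr rfl fun p hp => ?_
        rw [Finset.HasAntidiagonal.mem_antidiagonal] at hp
        rw [key f p.1 (by omega), key g p.2 (by omega)]

noncomputable def substEHom : PowerSeries ℚ →+* PowerSeries ℚ where
  toFun := substE
  map_one' := substE_one
  map_mul' := substE_mul
  map_zero' := substE_zero
  map_add' := substE_add

lemma substE_X : substE PowerSeries.X = Esub := by
  ext m
  rw [coeff_substE]
  rcases m with _ | m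
  · simp [Finset.sum_range_succ, PowerSeries.coeff_zero_eq_constantCoeff, constantCoeff_Esub]
  · rw [Finset.sum_eq_single 1]
    · simp
    · intro n hn h1
      rw [PowerSeries.coeff_X, if_neg h1, zero_mul]
    · intro h
      simp at h


lemma stirling2_eq_zero : ∀ {m n : ℕ}, m < n → stirling2 m n = 0 := by
  intro m
  induction m with
  | zero => intro n h; cases n with
    | zero => omega
    | succ n => rfl
  | succ m ih => intro n h; cases n with
    | zero => omega
    | succ n =>
      show (n + 1) * stirling2 m (n + 1) + stirling2 m n = 0
      rw [ih (by omega), ih (by omega), mul_zero]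

lemma derivative_exp : d⁄dX ℚ (PowerSeries.exp ℚ) = PowerSeries.exp ℚ := by
  ext n
  rw [PowerSeries.coeff_derivative, PowerSeries.coeff_exp, PowerSeries.coeff_exp]
  have h1 : ((n + 1).factorial : ℚ) = (n + 1) * n.factorial := by
    exact_mod_cast Nat.factorial_succ n
  have h2 : (n.factorial : ℚ) ≠ 0 := Nat.cast_ne_zero.mpr (Nat.factorial_ne_zero n)
  simp only [Algebra.algebraMap_self, RingHom.id_apply] at *
  rw [h1]
  field_simp

lemma derivative_Esub : d⁄dX ℚ Esub = Esub + 1 := by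
  rw [Esub, map_sub, _root_.derivative_exp]
  simp

lemma coeff_Esub_pow (m n : ℕ) :
    PowerSeries.coeff m (Esub ^ n) =
      (stirling2 m n : ℚ) * (n.factorial : ℚ) / (m.factorial : ℚ) := by
  induction m generalizing n with
  | zero =>
    cases n with
    | zero => simp [stirling2]
    | succ n =>
      rw [PowerSeries.coeff_zero_eq_constantCoeff, map_pow, constantCoeff_Esub]
      simp [stirling2_eq_zero (Nat.succ_pos n)]
  | succ m ih =>
    cases n with
    | zero =>
      rw [pow_zero, PowerSeries.coeff_one, if_neg (Nat.succ_ne_zero m)]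
      simp [stirling2]
    | succ j =>
      have hder : d⁄dX ℚ (Esub ^ (j + 1)) =
          ((j + 1 : ℕ) : PowerSeries ℚ) * (Esub ^ (j + 1) + Esub ^ j) := by
        rw [Derivation.leibniz_pow, derivative_Esub]
        simp only [Nat.add_sub_cancel, smul_eq_mul, nsmul_eq_mul]
        ring
      have hco := congrArg (PowerSeries.coeff m) hder
      rw [PowerSeries.coeff_derivative, ← map_natCast (PowerSeries.C (R := ℚ)) (j + 1),
        PowerSeries.coeff_C_mul, map_add, ih (j + 1), ih j] at hco
      have hS : (stirling2 (m + 1) (j + 1) : ℚ) =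
          (j + 1) * stirling2 m (j + 1) + stirling2 m j := by
        show ((((j + 1) * stirling2 m (j + 1) + stirling2 m j : ℕ)) : ℚ) = _
        push_cast
        ring
      have hm : ((m + 1).factorial : ℚ) = (m + 1) * m.factorial := by
        exact_mod_cast Nat.factorial_succ m
      have hj : ((j + 1).factorial : ℚ) = (j + 1) * j.factorial := by
        exact_mod_cast Nat.factorial_succ j
      have hmne : (m.factorial : ℚ) ≠ 0 := Nat.cast_ne_zero.mpr (Nat.factorial_ne_zero m)
      have hm1 : ((m : ℚ) + 1) ≠ 0 := by positivity
      push_cast at hco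
      rw [hS, hm, hj]
      have : PowerSeries.coeff (m + 1) (Esub ^ (j + 1)) * ((m : ℚ) + 1) =
          ((j : ℚ) + 1) * ((stirling2 m (j + 1) : ℚ) * ((j + 1).factorial : ℚ) / (m.factorial : ℚ)
            + (stirling2 m j : ℚ) * (j.factorial : ℚ) / (m.factorial : ℚ)) := by
        rw [hco]
      rw [hj] at this
      field_simp at this ⊢
      linarith [this]

lemma sum_stirling2_falling (m : ℕ) (x : ℚ) :
    x ^ m = ∑ n ∈ range (m + 1), (stirling2 m n : ℚ) * ∏ i ∈ range n, (x - i) := by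
  induction m with
  | zero => simp [stirling2]
  | succ m ih =>
    have key : ∀ n : ℕ, x * ∏ i ∈ range n, (x - i) =
        (∏ i ∈ range (n + 1), (x - i)) + n * ∏ i ∈ range n, (x - i) := by
      intro n
      rw [Finset.prod_range_succ]
      ring
    have hstep : x ^ (m + 1) =
        (∑ n ∈ range (m + 1), (stirling2 m n : ℚ) * ∏ i ∈ range (n + 1), (x - i))
          + ∑ n ∈ range (m + 1), (n : ℚ) * (stirling2 m n : ℚ) * ∏ i ∈ range n, (x - i) := by
      calc x ^ (m + 1) = x * x ^ m := by ring
        _ = ∑ n ∈ range (m + 1), (stirling2 m n : ℚ) * (x * ∏ i ∈ range n, (x - i)) := by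
            rw [ih, Finset.mul_sum]
            exact Finset.sum_congr rfl fun n _ => by ring
        _ = _ := by
            rw [← Finset.sum_add_distrib]
            exact Finset.sum_congr rfl fun n _ => by rw [key]; ring
    have hsecond : ∑ n ∈ range (m + 1), (n : ℚ) * (stirling2 m n : ℚ) * ∏ i ∈ range n, (x - i)
        = ∑ j ∈ range m, ((j : ℚ) + 1) * (stirling2 m (j + 1) : ℚ) *
            ∏ i ∈ range (j + 1), (x - i) := by
      rw [Finset.sum_range_succ' (fun n => (n : ℚ) * (stirling2 m n : ℚ) * ∏ i ∈ range n, (x - i)) m]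
      push_cast
      simp
    have htarget : ∑ n ∈ range (m + 2), (stirling2 (m + 1) n : ℚ) * ∏ i ∈ range n, (x - i)
        = (∑ j ∈ range (m + 1), ((j : ℚ) + 1) * (stirling2 m (j + 1) : ℚ) *
            ∏ i ∈ range (j + 1), (x - i))
          + ∑ j ∈ range (m + 1), (stirling2 m j : ℚ) * ∏ i ∈ range (j + 1), (x - i) := by
      rw [Finset.sum_range_succ'
        (fun n => (stirling2 (m + 1) n : ℚ) * ∏ i ∈ range n, (x - i)) (m + 1)]
      have h0 : (stirling2 (m + 1) 0 : ℚ) = 0 := by norm_num [stirling2]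
      rw [h0, zero_mul, add_zero, ← Finset.sum_add_distrib]
      refine Finset.sum_congr rfl fun j _ => ?_
      have : (stirling2 (m + 1) (j + 1) : ℚ) =
          ((j : ℚ) + 1) * (stirling2 m (j + 1) : ℚ) + (stirling2 m j : ℚ) := by
        show ((((j + 1) * stirling2 m (j + 1) + stirling2 m j : ℕ)) : ℚ) = _
        push_cast
        ring
      rw [this]
      ring
    have hlast : ∑ j ∈ range (m + 1), ((j : ℚ) + 1) * (stirling2 m (j + 1) : ℚ) *
          ∏ i ∈ range (j + 1), (x - i)
        = ∑ j ∈ range m, ((j : ℚ) + 1) * (stirling2 m (j + 1) : ℚ) *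
            ∏ i ∈ range (j + 1), (x - i) := by
      rw [Finset.sum_range_succ, stirling2_eq_zero (Nat.lt_succ_self m)]
      simp
    rw [htarget, hlast, hstep, ← hsecond]
    ring

lemma substE_egf (a : ℕ → ℚ) :
    substE (egf a) = egf (fun m => ∑ n ∈ range (m + 1), a n * (stirling2 m n : ℚ)) := by
  ext m
  rw [coeff_substE, egf, egf, PowerSeries.coeff_mk, Finset.sum_div]
  refine Finset.sum_congr rfl fun n hn => ?_
  rw [PowerSeries.coeff_mk, coeff_Esub_pow]
  have hne : (n.factorial : ℚ) ≠ 0 := Nat.cast_ne_zero.mpr (Nat.factorial_ne_zero n)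
  field_simp

lemma substE_onePlusTPow (x : ℚ) : substE (onePlusTPow x) = expXT x := by
  ext m
  rw [coeff_substE, expXT, egf, PowerSeries.coeff_mk]
  have hstep : ∀ n ∈ range (m + 1),
      PowerSeries.coeff n (onePlusTPow x) * PowerSeries.coeff m (Esub ^ n) =
        (stirling2 m n : ℚ) * (∏ i ∈ range n, (x - i)) / (m.factorial : ℚ) := by
    intro n hn
    rw [onePlusTPow, egf, PowerSeries.coeff_mk, coeff_Esub_pow]
    have hne : (n.factorial : ℚ) ≠ 0 := Nat.cast_ne_zero.mpr (Nat.factorial_ne_zero n)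
    field_simp
  rw [Finset.sum_congr rfl hstep, ← Finset.sum_div, ← sum_stirling2_falling]

lemma substEHom_apply (f : PowerSeries ℚ) : substEHom f = substE f := rfl

lemma one_add_Esub : 1 + Esub = PowerSeries.exp ℚ := by
  rw [Esub]
  ring

theorem boole_order_k_stirling2_eq_euler_order_k (k L : ℕ) (hk : 1 ≤ k) (hL : 0 < L) (x : ℚ)
    (Blk : ℕ → ℚ) (Ek : ℕ → ℚ → ℚ)
    (hBlk : egf (fun n => 2 ^ k * Blk n) * (1 + (1 + PowerSeries.X) ^ L) ^ k =
      2 ^ k * onePlusTPow x)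
    (hEk : ∀ y : ℚ, egf (fun m => Ek m y) * (PowerSeries.exp ℚ + 1) ^ k = 2 ^ k * expXT y)
    (m : ℕ) :
    ∑ n ∈ Finset.range (m + 1), Blk n * (stirling2 m n : ℚ) =
      ((L : ℚ) ^ m / 2 ^ k) * Ek m (x / L) := by
  have hLne : ((L : ℚ)) ≠ 0 := Nat.cast_ne_zero.mpr hL.ne'
  -- transform hBlk by substitution t ↦ e^t - 1
  have h1 := congrArg substEHom hBlk
  simp only [map_mul, map_pow, map_add, map_one, map_ofNat, substEHom_apply, substE_X,
    substE_egf, substE_onePlusTPow, one_add_Esub] at h1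
  rw [PowerSeries.exp_pow_eq_rescale_exp] at h1
  -- transform hEk at x/L by rescaling t ↦ L t
  have h2 := congrArg (PowerSeries.rescale (L : ℚ)) (hEk (x / L))
  simp only [map_mul, map_pow, map_add, map_one, map_ofNat] at h2
  have hre1 : PowerSeries.rescale (L : ℚ) (egf fun m => Ek m (x / L)) =
      egf (fun m => (L : ℚ) ^ m * Ek m (x / L)) := by
    rw [egf, egf, PowerSeries.rescale_mk]
    exact congrArg PowerSeries.mk (funext fun n => (mul_div_assoc _ _ _).symm)
  have hre2 : PowerSeries.rescale (L : ℚ) (expXT (x / L)) = expXT x := by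
    rw [expXT, expXT, egf, egf, PowerSeries.rescale_mk]
    refine congrArg PowerSeries.mk (funext fun n => ?_)
    rw [mul_div_assoc' , ← mul_pow, mul_div_cancel₀ x hLne]
  rw [hre1, hre2, add_comm (PowerSeries.rescale (L : ℚ) (PowerSeries.exp ℚ)) 1] at h2
  -- cancel the common unit factor
  have hCne : ((1 : PowerSeries ℚ) + PowerSeries.rescale (L : ℚ) (PowerSeries.exp ℚ)) ^ k ≠ 0 := by
    intro h
    have := congrArg (PowerSeries.constantCoeff (R := ℚ)) h
    rw [map_pow, map_add, map_one, map_zero] at this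
    have hc : PowerSeries.constantCoeff (R := ℚ) (PowerSeries.rescale (L : ℚ) (PowerSeries.exp ℚ)) = 1 := by
      rw [← PowerSeries.coeff_zero_eq_constantCoeff_apply, PowerSeries.coeff_rescale, pow_zero,
        one_mul, PowerSeries.coeff_zero_eq_constantCoeff_apply, PowerSeries.constantCoeff_exp]
    rw [hc] at this
    norm_num at this
  have heq := mul_right_cancel₀ hCne (h1.trans h2.symm)
  have hco := congrArg (PowerSeries.coeff m) heq
  rw [egf, egf, PowerSeries.coeff_mk, PowerSeries.coeff_mk] at hco
  have hmne : (m.factorial : ℚ) ≠ 0 := Nat.cast_ne_zero.mpr (Nat.factorial_ne_zero m)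
  have hsum : (∑ n ∈ range (m + 1), 2 ^ k * Blk n * (stirling2 m n : ℚ)) =
      (L : ℚ) ^ m * Ek m (x / L) := by
    field_simp at hco
    exact hco
  have h2k : ((2 : ℚ)) ^ k ≠ 0 := by positivity
  have hfac : (∑ n ∈ range (m + 1), 2 ^ k * Blk n * (stirling2 m n : ℚ)) =
      2 ^ k * ∑ n ∈ range (m + 1), Blk n * (stirling2 m n : ℚ) := by
    rw [Finset.mul_sum]
    exact Finset.sum_congr rfl fun n _ => by ring
  rw [hfac] at hsum
  field_simp
  linarith [hsum]
end

section
/- For k ≥ 1, λ a positive integer, and n ≥ 0, the order-k Boole polynomials satisfy 2^k Bl_n^{(k)}(x|λ) = ∑_{l=0}^{n} s(n,l) λ^l E_l^{(k)}(x/λ). -/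
open Finset PowerSeries

lemma stirling1_succ_succ (n k : ℕ) :
    stirling1 (n + 1) (k + 1) = n * stirling1 n (k + 1) + stirling1 n k := rfl

lemma stirling1_eq_zero : ∀ {n k : ℕ}, n < k → stirling1 n k = 0 := by
  intro n
  induction n with
  | zero => intro k hk; match k, hk with | k + 1, _ => rfl
  | succ n ih =>
    intro k hk
    match k, hk with
    | k + 1, hk =>
      rw [stirling1_succ_succ, ih (by omega), ih (by omega)]
      simp

lemma s1_succ_succ (n l : ℕ) : s1 (n + 1) (l + 1) = s1 n l - (n : ℚ) * s1 n (l + 1) := by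
  rcases le_or_gt n l with h | h
  · have h1 : n - l = 0 := by omega
    have h2 : n + 1 - (l + 1) = 0 := by omega
    simp only [s1, h1, h2, pow_zero, one_mul, stirling1_succ_succ,
      stirling1_eq_zero (show n < l + 1 by omega)]
    push_cast
    ring
  · have h1 : n - l = (n - (l + 1)) + 1 := by omega
    have h2 : n + 1 - (l + 1) = (n - (l + 1)) + 1 := by omega
    simp only [s1, h1, h2, stirling1_succ_succ]
    push_cast
    ring

lemma n_mul_s1_zero (n : ℕ) : (n : ℚ) * s1 n 0 = 0 := by
  cases n with
  | zero => simp
  | succ m => simp [s1, show stirling1 (m+1) 0 = 0 from rfl]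

lemma sum_s1 (n : ℕ) (z : ℚ) :
    ∑ l ∈ range (n + 1), s1 n l * z ^ l = ∏ i ∈ range n, (z - i) := by
  induction n with
  | zero => simp [s1, show stirling1 0 0 = 1 from rfl]
  | succ n ih =>
    have hT : ∑ l ∈ range (n + 2), s1 n l * z ^ l
        = ∑ l ∈ range (n + 1), s1 n l * z ^ l := by
      rw [Finset.sum_range_succ]
      have : s1 n (n+1) = 0 := by simp [s1, stirling1_eq_zero (Nat.lt_succ_self n)]
      rw [this]; ring
    have hT' : ∑ j ∈ range (n + 1), s1 n (j + 1) * z ^ (j + 1)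
        = ∑ l ∈ range (n + 1), s1 n l * z ^ l - s1 n 0 := by
      have := Finset.sum_range_succ' (fun l => s1 n l * z ^ l) (n + 1)
      rw [hT] at this
      simp only [pow_zero, mul_one] at this
      linarith
    rw [Finset.sum_range_succ' (fun l => s1 (n + 1) l * z ^ l) (n + 1)]
    have h0 : s1 (n + 1) 0 * z ^ 0 = 0 := by
      simp [s1, show stirling1 (n+1) 0 = 0 from rfl]
    rw [h0, add_zero]
    simp only [s1_succ_succ, sub_mul]
    rw [Finset.sum_sub_distrib]
    have h1 : ∑ j ∈ range (n + 1), s1 n j * z ^ (j + 1)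
        = z * ∑ j ∈ range (n + 1), s1 n j * z ^ j := by
      rw [Finset.mul_sum]; apply Finset.sum_congr rfl; intro j _; ring
    have h2 : ∑ j ∈ range (n + 1), (n : ℚ) * s1 n (j + 1) * z ^ (j + 1)
        = (n : ℚ) * (∑ l ∈ range (n + 1), s1 n l * z ^ l - s1 n 0) := by
      rw [← hT', Finset.mul_sum]; apply Finset.sum_congr rfl; intro j _; ring
    rw [h1, h2, ih, Finset.prod_range_succ]
    have := n_mul_s1_zero n
    rw [ih] at *
    nlinarith [this]

lemma choose_succ_rat (m n : ℕ) :
    ((m : ℚ) - n) * m.choose n = (n + 1) * m.choose (n + 1) := by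
  rcases le_or_gt n m with h | h
  · have := Nat.choose_succ_right_eq m n
    have hc : ((m.choose (n+1) * (n+1) : ℕ) : ℚ) = ((m.choose n * (m - n) : ℕ) : ℚ) := by
      exact_mod_cast congrArg (Nat.cast : ℕ → ℚ) this
    push_cast [Nat.cast_sub h] at hc
    linarith
  · rw [Nat.choose_eq_zero_of_lt h, Nat.choose_eq_zero_of_lt (by omega)]
    simp

lemma prod_sub_eq_choose (m n : ℕ) :
    ∏ i ∈ range n, ((m : ℚ) - i) = n.factorial * m.choose n := by
  induction n with
  | zero => simp
  | succ n ih =>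
    rw [Finset.prod_range_succ, ih, Nat.factorial_succ]
    push_cast
    have := choose_succ_rat m n
    nlinarith [this]

lemma coeff_one_add_X_pow (m n : ℕ) :
    PowerSeries.coeff (R := ℚ) n ((1 + PowerSeries.X) ^ m) = m.choose n := by
  induction m generalizing n with
  | zero =>
    cases n with
    | zero => simp
    | succ n => simp [PowerSeries.coeff_one]
  | succ m ih =>
    rw [pow_succ, mul_add, mul_one]
    cases n with
    | zero => rw [map_add, ih 0, PowerSeries.coeff_zero_mul_X]; simp
    | succ n =>
      rw [map_add, ih (n+1), PowerSeries.coeff_succ_mul_X, ih n]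
      rw [Nat.choose_succ_succ m n]
      push_cast
      ring

noncomputable def SS (L : ℕ) : PowerSeries ℚ :=
  PowerSeries.mk fun n => if n = 0 then 0 else (-1 : ℚ) ^ (n + 1) * L / n

lemma coeff_SS (L n : ℕ) :
    PowerSeries.coeff n (SS L) = if n = 0 then 0 else (-1 : ℚ) ^ (n + 1) * L / n :=
  PowerSeries.coeff_mk _ _

lemma constantCoeff_SS (L : ℕ) : PowerSeries.constantCoeff (SS L) = 0 := by
  rw [← PowerSeries.coeff_zero_eq_constantCoeff_apply, coeff_SS]; simp

lemma one_add_X_mul_dSS (L : ℕ) :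
    (1 + PowerSeries.X) * (PowerSeries.derivative ℚ (SS L)) = PowerSeries.C (L : ℚ) := by
  ext n
  rw [add_mul, one_mul, map_add]
  cases n with
  | zero =>
    rw [PowerSeries.coeff_zero_X_mul, PowerSeries.coeff_derivative, coeff_SS,
      PowerSeries.coeff_zero_C]
    norm_num
  | succ n =>
    rw [PowerSeries.coeff_succ_X_mul, PowerSeries.coeff_derivative,
      PowerSeries.coeff_derivative, coeff_SS, coeff_SS, PowerSeries.coeff_C]
    have h1 : ((n:ℚ) + 1) ≠ 0 := by positivity
    have h2 : ((n:ℚ) + 1 + 1) ≠ 0 := by positivity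
    simp only [Nat.succ_ne_zero, if_false, Nat.add_eq_zero, and_false]
    push_cast
    field_simp
    ring

lemma rec1 (L l n : ℕ) :
    ((n : ℚ) + 1) * PowerSeries.coeff (n + 1) (SS L ^ (l + 1))
      + (n : ℚ) * PowerSeries.coeff n (SS L ^ (l + 1))
    = ((l : ℚ) + 1) * L * PowerSeries.coeff n (SS L ^ l) := by
  have hD : PowerSeries.derivative ℚ (SS L ^ (l + 1))
      = (l + 1) • (SS L ^ l * PowerSeries.derivative ℚ (SS L)) := by
    rw [Derivation.leibniz_pow]
    simp [smul_eq_mul]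
  have key : (1 + PowerSeries.X) * PowerSeries.derivative ℚ (SS L ^ (l + 1))
      = (l + 1) • (SS L ^ l * PowerSeries.C (L : ℚ)) := by
    rw [hD, mul_smul_comm, ← one_add_X_mul_dSS L]
    ring_nf
  have hc := congrArg (PowerSeries.coeff n) key
  rw [add_mul, one_mul, map_add, map_nsmul] at hc
  have hXT : PowerSeries.coeff n (PowerSeries.X * PowerSeries.derivative ℚ (SS L ^ (l + 1)))
      = (n : ℚ) * PowerSeries.coeff n (SS L ^ (l + 1)) := by
    cases n with
    | zero => rw [PowerSeries.coeff_zero_X_mul]; simp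
    | succ m =>
      rw [PowerSeries.coeff_succ_X_mul, PowerSeries.coeff_derivative]
      push_cast
      ring
  rw [hXT, PowerSeries.coeff_derivative, PowerSeries.coeff_mul_C] at hc
  rw [nsmul_eq_mul] at hc
  push_cast at hc
  push_cast
  linarith

lemma coeff_SS_pow (L : ℕ) : ∀ (l n : ℕ), PowerSeries.coeff n (SS L ^ l)
    = (l.factorial : ℚ) * s1 n l * (L : ℚ) ^ l / (n.factorial : ℚ) := by
  intro l
  induction l with
  | zero =>
    intro n
    cases n with
    | zero => simp [s1, show stirling1 0 0 = 1 from rfl]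
    | succ m =>
      rw [pow_zero, PowerSeries.coeff_one]
      simp [s1, show stirling1 (m + 1) 0 = 0 from rfl]
  | succ l ih =>
    intro n
    induction n with
    | zero =>
      rw [PowerSeries.coeff_zero_eq_constantCoeff, map_pow, constantCoeff_SS,
        zero_pow (Nat.succ_ne_zero l)]
      simp [s1, show stirling1 0 (l + 1) = 0 from rfl]
    | succ n ih2 =>
      have h := rec1 L l n
      rw [ih n, ih2] at h
      have hn1 : ((n : ℚ) + 1) ≠ 0 := by positivity
      have hnf : ((n.factorial : ℚ)) ≠ 0 := by exact_mod_cast n.factorial_ne_zero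
      have hc : PowerSeries.coeff (n + 1) (SS L ^ (l + 1))
          = (((l : ℚ) + 1) * L * ((l.factorial : ℚ) * s1 n l * (L : ℚ) ^ l / n.factorial)
            - (n : ℚ) * ((((l + 1).factorial : ℚ)) * s1 n (l + 1) * (L : ℚ) ^ (l + 1)
              / n.factorial)) / ((n : ℚ) + 1) := by
        rw [eq_div_iff hn1]
        push_cast at h ⊢
        linarith
      rw [hc, s1_succ_succ, Nat.factorial_succ n, Nat.factorial_succ l]
      push_cast
      field_simp
      ring

lemma coeff_SS_pow_eq_zero {L l n : ℕ} (h : n < l) : PowerSeries.coeff n (SS L ^ l) = 0 := by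
  rw [coeff_SS_pow, s1, stirling1_eq_zero h]
  simp

noncomputable def substS (L : ℕ) (F : PowerSeries ℚ) : PowerSeries ℚ :=
  PowerSeries.mk fun n => ∑ l ∈ range (n + 1), PowerSeries.coeff l F * PowerSeries.coeff n (SS L ^ l)

lemma coeff_substS (L : ℕ) (F : PowerSeries ℚ) (n : ℕ) :
    PowerSeries.coeff n (substS L F)
      = ∑ l ∈ range (n + 1), PowerSeries.coeff l F * PowerSeries.coeff n (SS L ^ l) :=
  PowerSeries.coeff_mk _ _

lemma coeff_substS' (L : ℕ) (F : PowerSeries ℚ) {n m : ℕ} (h : n ≤ m) :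
    PowerSeries.coeff n (substS L F)
      = ∑ l ∈ range (m + 1), PowerSeries.coeff l F * PowerSeries.coeff n (SS L ^ l) := by
  rw [coeff_substS]
  apply Finset.sum_subset (Finset.range_subset_range.2 (by omega))
  intro x hx hnx
  rw [coeff_SS_pow_eq_zero (by simp at hx hnx; omega), mul_zero]

lemma substS_one (L : ℕ) : substS L 1 = 1 := by
  ext n
  rw [coeff_substS, Finset.sum_eq_single 0]
  · simp
  · intro b _ hb
    rw [PowerSeries.coeff_one, if_neg hb]
    simp
  · simp

lemma substS_add (L : ℕ) (F G : PowerSeries ℚ) :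
    substS L (F + G) = substS L F + substS L G := by
  ext n
  simp only [coeff_substS, map_add, add_mul, Finset.sum_add_distrib]

lemma sum_antidiag_tri (n : ℕ) (h : ℕ × ℕ → ℚ) (hv : ∀ p : ℕ × ℕ, n < p.1 + p.2 → h p = 0) :
    ∑ l ∈ range (n + 1), ∑ p ∈ Finset.HasAntidiagonal.antidiagonal l, h p
      = ∑ p ∈ range (n + 1) ×ˢ range (n + 1), h p := by
  rw [← Finset.sum_biUnion]
  · apply Finset.sum_subset
    · intro p hp
      simp only [Finset.mem_biUnion, Finset.mem_range, Finset.HasAntidiagonal.mem_antidiagonal] at hp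
      obtain ⟨l, hl, hpl⟩ := hp
      simp only [Finset.mem_product, Finset.mem_range]
      omega
    · intro p hp hnp
      apply hv
      simp only [Finset.mem_biUnion, Finset.mem_range, Finset.HasAntidiagonal.mem_antidiagonal] at hnp
      by_contra hc
      exact hnp ⟨p.1 + p.2, by omega, rfl⟩
  · intro a _ b _ hab
    simp only [Finset.disjoint_left, Finset.HasAntidiagonal.mem_antidiagonal]
    intro p hpa hpb
    exact hab (hpa ▸ hpb)

lemma substS_mul (L : ℕ) (F G : PowerSeries ℚ) :
    substS L (F * G) = substS L F * substS L G := by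
  ext n
  rw [coeff_substS, PowerSeries.coeff_mul]
  have hR : ∑ p ∈ Finset.HasAntidiagonal.antidiagonal n,
        PowerSeries.coeff p.1 (substS L F) * PowerSeries.coeff p.2 (substS L G)
      = ∑ p ∈ range (n + 1) ×ˢ range (n + 1),
          PowerSeries.coeff p.1 F * PowerSeries.coeff p.2 G
            * PowerSeries.coeff n (SS L ^ (p.1 + p.2)) := by
    have step1 : ∀ p ∈ Finset.HasAntidiagonal.antidiagonal n,
        PowerSeries.coeff p.1 (substS L F) * PowerSeries.coeff p.2 (substS L G)
          = ∑ q ∈ range (n + 1) ×ˢ range (n + 1),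
              PowerSeries.coeff q.1 F * PowerSeries.coeff q.2 G
                * (PowerSeries.coeff p.1 (SS L ^ q.1) * PowerSeries.coeff p.2 (SS L ^ q.2)) := by
      intro p hp
      rw [Finset.HasAntidiagonal.mem_antidiagonal] at hp
      rw [coeff_substS' L F (show p.1 ≤ n by omega), coeff_substS' L G (show p.2 ≤ n by omega),
        Finset.sum_mul_sum, ← Finset.sum_product']
      apply Finset.sum_congr rfl
      intro q _
      ring
    rw [Finset.sum_congr rfl step1, Finset.sum_comm]
    apply Finset.sum_congr rfl
    intro q _
    rw [← Finset.mul_sum]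
    congr 1
    rw [pow_add, PowerSeries.coeff_mul]
  rw [hR]
  have hL : ∑ l ∈ range (n + 1), PowerSeries.coeff l (F * G) * PowerSeries.coeff n (SS L ^ l)
      = ∑ l ∈ range (n + 1), ∑ p ∈ Finset.HasAntidiagonal.antidiagonal l,
          PowerSeries.coeff p.1 F * PowerSeries.coeff p.2 G
            * PowerSeries.coeff n (SS L ^ (p.1 + p.2)) := by
    apply Finset.sum_congr rfl
    intro l _
    rw [PowerSeries.coeff_mul, Finset.sum_mul]
    apply Finset.sum_congr rfl
    intro p hp
    rw [Finset.HasAntidiagonal.mem_antidiagonal] at hp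
    rw [hp]
  rw [hL]
  exact sum_antidiag_tri n _ (fun p hp => by
    rw [coeff_SS_pow_eq_zero hp, mul_zero])

noncomputable def substSHom (L : ℕ) : PowerSeries ℚ →+* PowerSeries ℚ where
  toFun := substS L
  map_one' := substS_one L
  map_mul' := substS_mul L
  map_zero' := by ext n; simp [coeff_substS]
  map_add' := substS_add L

lemma coeff_egf (a : ℕ → ℚ) (n : ℕ) :
    PowerSeries.coeff n (egf a) = a n / (Nat.factorial n : ℚ) :=
  PowerSeries.coeff_mk _ _

lemma substS_expXT (L : ℕ) (y : ℚ) : substS L (expXT y) = onePlusTPow (y * L) := by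
  ext n
  rw [coeff_substS, onePlusTPow, coeff_egf, ← sum_s1 n (y * L), Finset.sum_div]
  apply Finset.sum_congr rfl
  intro l _
  rw [expXT, coeff_egf, coeff_SS_pow]
  have hl : ((l.factorial : ℚ)) ≠ 0 := by exact_mod_cast l.factorial_ne_zero
  field_simp
  ring

lemma substS_exp (L : ℕ) : substS L (PowerSeries.exp ℚ) = (1 + PowerSeries.X) ^ L := by
  ext n
  rw [coeff_substS, coeff_one_add_X_pow]
  have : ∀ l ∈ range (n + 1),
      PowerSeries.coeff l (PowerSeries.exp ℚ) * PowerSeries.coeff n (SS L ^ l)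
        = s1 n l * (L : ℚ) ^ l / (n.factorial : ℚ) := by
    intro l _
    rw [PowerSeries.coeff_exp, coeff_SS_pow]
    have hl : ((l.factorial : ℚ)) ≠ 0 := by exact_mod_cast l.factorial_ne_zero
    simp only [map_div₀, map_one, map_natCast, Algebra.algebraMap_self, RingHom.id_apply]
    field_simp
  rw [Finset.sum_congr rfl this, ← Finset.sum_div, sum_s1, prod_sub_eq_choose]
  have hn : ((n.factorial : ℚ)) ≠ 0 := by exact_mod_cast n.factorial_ne_zero
  field_simp

theorem boole_order_k_eq_sum_stirling1_euler (k L : ℕ) (hk : 1 ≤ k) (hL : 0 < L) (x : ℚ)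
    (Blk : ℕ → ℚ) (Ek : ℕ → ℚ → ℚ)
    (hBlk : egf (fun n => 2 ^ k * Blk n) * (1 + (1 + PowerSeries.X) ^ L) ^ k =
      2 ^ k * onePlusTPow x)
    (hEk : ∀ y : ℚ, egf (fun m => Ek m y) * (PowerSeries.exp ℚ + 1) ^ k = 2 ^ k * expXT y)
    (n : ℕ) :
    2 ^ k * Blk n = ∑ l ∈ Finset.range (n + 1), s1 n l * (L : ℚ) ^ l * Ek l (x / L) := by
  have hLQ : ((L : ℚ)) ≠ 0 := Nat.cast_ne_zero.2 hL.ne'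
  set y := x / (L : ℚ) with hy
  have hyL : y * L = x := div_mul_cancel₀ x hLQ
  have H := congrArg (substSHom L) (hEk y)
  simp only [map_mul, map_pow, map_add, map_one, map_ofNat] at H
  have hsub : (substSHom L) (egf fun m => Ek m y) = substS L (egf fun m => Ek m y) := rfl
  have hsub2 : (substSHom L) (PowerSeries.exp ℚ) = substS L (PowerSeries.exp ℚ) := rfl
  have hsub3 : (substSHom L) (expXT y) = substS L (expXT y) := rfl
  rw [hsub, hsub2, hsub3, substS_exp, substS_expXT, hyL] at H
  have hM : ((1 : PowerSeries ℚ) + (1 + PowerSeries.X) ^ L) ^ k ≠ 0 := by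
    intro h0
    have := congrArg (PowerSeries.constantCoeff) h0
    rw [map_pow, map_add, map_one, map_pow, map_add, map_one,
      PowerSeries.constantCoeff_X, add_zero, one_pow, map_zero] at this
    norm_num at this
  have hAC : egf (fun m => 2 ^ k * Blk m) = substS L (egf fun m => Ek m y) := by
    apply mul_right_cancel₀ hM
    rw [hBlk, ← H]
    ring
  have hc := congrArg (PowerSeries.coeff n) hAC
  rw [coeff_egf, coeff_substS] at hc
  have hterm : ∀ l ∈ range (n + 1),
      PowerSeries.coeff l (egf fun m => Ek m y) * PowerSeries.coeff n (SS L ^ l)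
        = s1 n l * (L : ℚ) ^ l * Ek l y / (n.factorial : ℚ) := by
    intro l _
    rw [coeff_egf, coeff_SS_pow]
    have hl : ((l.factorial : ℚ)) ≠ 0 := by exact_mod_cast l.factorial_ne_zero
    field_simp
  rw [Finset.sum_congr rfl hterm, ← Finset.sum_div] at hc
  have hn : ((n.factorial : ℚ)) ≠ 0 := by exact_mod_cast n.factorial_ne_zero
  rw [div_eq_div_iff hn hn] at hc
  exact mul_right_cancel₀ hn hc
end

section
/- Define the Boole polynomials of the second kind B̂l_n(x|λ) by the generating function ∑_{n≥0} B̂l_n(x|λ) t^n/n! = (1+t)^{λ+x} / (1 + (1+t)^λ). Then for every m ≥ 0, ∑_{n=0}^{m} B̂l_n(x|λ) S₂(m,n) = (λ^m/2) E_m((λ+x)/λ). -/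
open Finset PowerSeries

lemma stirling2_zero_of_lt : ∀ m n, m < n → stirling2 m n = 0 := by
  intro m
  induction m with
  | zero => intro n hn; match n, hn with | k+1, _ => rfl
  | succ m ih =>
    intro n hn
    match n, hn with
    | k+1, hn =>
      have h1 : m < k := Nat.lt_of_succ_lt_succ hn
      show (k + 1) * stirling2 m (k + 1) + stirling2 m k = 0
      rw [ih _ (h1.trans (Nat.lt_succ_self k)), ih _ h1]
      simp

noncomputable def gg : PowerSeries ℚ := PowerSeries.exp ℚ - 1

lemma constantCoeff_gg : constantCoeff gg = 0 := by
  simp [gg]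

lemma coeff_gg_pow_zero_of_lt {m n : ℕ} (h : m < n) : coeff m (gg ^ n) = 0 := by
  induction n generalizing m with
  | zero => omega
  | succ n ih =>
    rw [pow_succ, PowerSeries.coeff_mul]
    apply Finset.sum_eq_zero
    rintro ⟨i, j⟩ hij
    rw [Finset.HasAntidiagonal.mem_antidiagonal] at hij
    rcases Nat.lt_or_ge i n with hi | hi
    · rw [ih hi, zero_mul]
    · have : j = 0 := by omega
      subst this
      rw [PowerSeries.coeff_zero_eq_constantCoeff, constantCoeff_gg, mul_zero]

lemma deriv_gg : d⁄dX ℚ gg = exp ℚ := by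
  have h : d⁄dX ℚ (exp ℚ) = exp ℚ := by
    ext n
    simp [PowerSeries.coeff_derivative, PowerSeries.coeff_exp, Nat.factorial_succ]
    field_simp
  simp [gg, h]

lemma coeff_gg_pow (m : ℕ) : ∀ n, coeff m (gg ^ n) =
    (stirling2 m n : ℚ) * (Nat.factorial n : ℚ) / (Nat.factorial m : ℚ) := by
  induction m with
  | zero =>
    intro n
    rw [PowerSeries.coeff_zero_eq_constantCoeff, map_pow, constantCoeff_gg]
    cases n with
    | zero => simp [stirling2]
    | succ n => simp [stirling2, zero_pow]
  | succ m ih =>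
    intro n
    cases n with
    | zero =>
      simp [pow_zero, PowerSeries.coeff_one, stirling2]
    | succ n =>
      have hd : d⁄dX ℚ (gg ^ (n+1)) = (n+1 : ℕ) • (gg ^ n * exp ℚ) := by
        rw [Derivation.leibniz_pow, deriv_gg]
        simp [smul_mul_assoc]
      have hc := congrArg (coeff m) hd
      rw [PowerSeries.coeff_derivative] at hc
      have hexp : (exp ℚ : PowerSeries ℚ) = gg + 1 := by simp [gg]
      rw [hexp, show gg ^ n * (gg + 1) = gg^(n+1) + gg^n by ring,
        map_nsmul, map_add, ih, ih] at hc
      have hm : (Nat.factorial m : ℚ) ≠ 0 := Nat.cast_ne_zero.mpr (Nat.factorial_ne_zero m)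
      have hm1 : ((m:ℚ) + 1) ≠ 0 := by positivity
      have key : coeff (m+1) (gg ^ (n+1)) =
          (n+1 : ℚ) * ((stirling2 m (n+1) : ℚ) * ((n+1).factorial : ℚ) / (m.factorial : ℚ)
            + (stirling2 m n : ℚ) * (n.factorial : ℚ) / (m.factorial : ℚ)) / ((m:ℚ)+1) := by
        simp only [nsmul_eq_mul, Nat.cast_add, Nat.cast_one] at hc
        field_simp at hc ⊢
        linarith [hc]
      rw [key]
      show _ = ((stirling2 (m+1) (n+1) : ℕ) : ℚ) * _ / _
      rw [show stirling2 (m+1) (n+1) = (n + 1) * stirling2 m (n + 1) + stirling2 m n from rfl]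
      push_cast [Nat.factorial_succ]
      field_simp

lemma sumB (a : ℚ) : ∀ m, ∑ n ∈ range (m+1), (∏ i ∈ range n, (a - i)) * (stirling2 m n : ℚ) = a ^ m := by
  intro m
  induction m with
  | zero => simp [stirling2]
  | succ m ih =>
    have key : a ^ (m+1) = ∑ n ∈ range (m+1), (∏ i ∈ range n, (a - i)) * (stirling2 m n : ℚ) * a := by
      rw [← Finset.sum_mul, ih]; ring
    rw [key]
    rw [Finset.sum_range_succ']
    have h0 : (∏ i ∈ range 0, (a - i)) * (stirling2 (m+1) 0 : ℚ) = 0 := by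
      simp [show stirling2 (m+1) 0 = 0 from rfl]
    rw [h0, add_zero]
    have step : ∀ k, (∏ i ∈ range (k+1), (a - i)) * (stirling2 (m+1) (k+1) : ℚ)
        = (∏ i ∈ range (k+1), (a - i)) * (stirling2 m k : ℚ)
          + (k+1 : ℚ) * ((∏ i ∈ range (k+1), (a - i)) * (stirling2 m (k+1) : ℚ)) := by
      intro k
      rw [show stirling2 (m+1) (k+1) = (k + 1) * stirling2 m (k + 1) + stirling2 m k from rfl]
      push_cast
      ring
    rw [Finset.sum_congr rfl (fun k _ => step k), Finset.sum_add_distrib]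
    have expand : ∀ n, (∏ i ∈ range n, (a - i)) * (stirling2 m n : ℚ) * a
        = (∏ i ∈ range (n+1), (a - i)) * (stirling2 m n : ℚ)
          + (n : ℚ) * ((∏ i ∈ range n, (a - i)) * (stirling2 m n : ℚ)) := by
      intro n
      rw [Finset.prod_range_succ]
      ring
    rw [Finset.sum_congr rfl (fun n _ => expand n), Finset.sum_add_distrib]
    congr 1
    have second : ∑ k ∈ range (m+1), (k+1 : ℚ) * ((∏ i ∈ range (k+1), (a - i)) * (stirling2 m (k+1) : ℚ))
        = ∑ n ∈ range (m+1), (n : ℚ) * ((∏ i ∈ range n, (a - i)) * (stirling2 m n : ℚ)) := by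
      conv_rhs => rw [Finset.sum_range_succ']
      rw [Finset.sum_range_succ, stirling2_zero_of_lt m (m+1) (Nat.lt_succ_self m)]
      simp only [Nat.cast_zero, Nat.cast_ofNat, mul_zero, add_zero, zero_mul]
      apply Finset.sum_congr rfl
      intro k _
      push_cast
      ring
    exact second

lemma coeff_onePlusTPow (x : ℚ) (n : ℕ) :
    coeff n (onePlusTPow x) = (∏ i ∈ Finset.range n, (x - i)) / (Nat.factorial n : ℚ) := by
  simp [onePlusTPow, egf, PowerSeries.coeff_mk]

lemma onePlusTPow_succ (b : ℚ) : onePlusTPow (b + 1) = onePlusTPow b * (1 + PowerSeries.X) := by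
  have h1 : ∀ n : ℕ, ∏ i ∈ range (n+1), (b + 1 - (i:ℚ)) = (∏ i ∈ range n, (b - i)) * (b + 1) := by
    intro n
    rw [Finset.prod_range_succ']
    congr 1
    · apply Finset.prod_congr rfl
      intro i _
      push_cast
      ring
    · push_cast
      ring
  ext n
  cases n with
  | zero =>
    simp [mul_add, mul_one, map_add, coeff_onePlusTPow, PowerSeries.coeff_zero_eq_constantCoeff]
  | succ n =>
    rw [mul_add, mul_one, map_add, PowerSeries.coeff_succ_mul_X]
    simp only [coeff_onePlusTPow]
    rw [h1 n, Finset.prod_range_succ]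
    have hf : ((n+1).factorial : ℚ) = (n+1) * (n.factorial : ℚ) := by
      push_cast [Nat.factorial_succ]
      ring
    have hn : (n.factorial : ℚ) ≠ 0 := Nat.cast_ne_zero.mpr (Nat.factorial_ne_zero n)
    have hn1 : ((n:ℚ)+1) ≠ 0 := by positivity
    rw [hf]
    field_simp
    ring

lemma onePlusTPow_natCast (L : ℕ) : (1 + PowerSeries.X : PowerSeries ℚ) ^ L = onePlusTPow (L : ℚ) := by
  induction L with
  | zero =>
    ext n
    cases n with
    | zero => simp [coeff_onePlusTPow]
    | succ n =>
      rw [coeff_onePlusTPow, Finset.prod_range_succ']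
      simp [PowerSeries.coeff_one]
  | succ L ih =>
    rw [pow_succ, ih, show ((L+1:ℕ):ℚ) = (L:ℚ)+1 by push_cast; ring, onePlusTPow_succ]

noncomputable def Cmp (F : PowerSeries ℚ) : PowerSeries ℚ :=
  PowerSeries.mk fun m => ∑ n ∈ range (m+1), coeff n F * coeff m (gg ^ n)

lemma coeff_Cmp (F : PowerSeries ℚ) (m : ℕ) :
    coeff m (Cmp F) = ∑ n ∈ range (m+1), coeff n F * coeff m (gg ^ n) := by
  simp [Cmp, PowerSeries.coeff_mk]

lemma Cmp_mul (F G : PowerSeries ℚ) : Cmp (F * G) = Cmp F * Cmp G := by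
  ext m
  rw [coeff_Cmp, PowerSeries.coeff_mul]
  have lhs1 : ∀ n ∈ range (m+1), coeff n (F * G) * coeff m (gg ^ n)
      = ∑ ij ∈ antidiagonal n, ∑ pq ∈ antidiagonal m,
          coeff ij.1 F * coeff ij.2 G * (coeff pq.1 (gg ^ ij.1) * coeff pq.2 (gg ^ ij.2)) := by
    intro n _
    rw [PowerSeries.coeff_mul, Finset.sum_mul]
    apply Finset.sum_congr rfl
    rintro ⟨i, j⟩ hij
    rw [Finset.HasAntidiagonal.mem_antidiagonal] at hij
    rw [← hij, pow_add, PowerSeries.coeff_mul, Finset.mul_sum]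
  rw [Finset.sum_congr rfl lhs1]
  rw [Finset.sum_congr rfl (fun n _ => Finset.sum_comm)]
  rw [Finset.sum_comm]
  apply Finset.sum_congr rfl
  rintro ⟨p, q⟩ hpq
  rw [Finset.HasAntidiagonal.mem_antidiagonal] at hpq
  rw [coeff_Cmp, coeff_Cmp, Finset.sum_mul_sum]
  have hdisj : (↑(range (m+1)) : Set ℕ).PairwiseDisjoint (fun n => antidiagonal n) := by
    intro a _ b _ hab
    simp only [Finset.disjoint_left]
    rintro ⟨i, j⟩ hia hib
    rw [Finset.HasAntidiagonal.mem_antidiagonal] at hia hib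
    exact hab (hia ▸ hib)
  rw [← Finset.sum_biUnion hdisj]
  rw [show ∑ i ∈ range (p+1), ∑ j ∈ range (q+1),
        (coeff i F * coeff p (gg ^ i)) * (coeff j G * coeff q (gg ^ j))
      = ∑ ij ∈ range (p+1) ×ˢ range (q+1),
        (coeff ij.1 F * coeff ij.2 G * (coeff p (gg ^ ij.1) * coeff q (gg ^ ij.2))) by
    rw [Finset.sum_product]
    apply Finset.sum_congr rfl; intro i _
    apply Finset.sum_congr rfl; intro j _
    ring]
  symm
  apply Finset.sum_subset
  · rintro ⟨i, j⟩ hij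
    simp only [Finset.mem_product, Finset.mem_range] at hij
    simp only [Finset.mem_biUnion, Finset.mem_range, Finset.HasAntidiagonal.mem_antidiagonal]
    exact ⟨i + j, by omega, rfl⟩
  · rintro ⟨i, j⟩ hij hnot
    simp only [Finset.mem_biUnion, Finset.mem_range, Finset.HasAntidiagonal.mem_antidiagonal] at hij
    simp only [Finset.mem_product, Finset.mem_range, not_and_or, not_lt] at hnot
    rcases hnot with h | h
    · rw [coeff_gg_pow_zero_of_lt (by omega : p < i)]
      ring
    · rw [coeff_gg_pow_zero_of_lt (by omega : q < j)]
      ring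

lemma Cmp_one : Cmp 1 = 1 := by
  ext m
  rw [coeff_Cmp]
  rw [Finset.sum_eq_single 0]
  · simp
  · intro n _ hn
    rw [PowerSeries.coeff_one, if_neg hn, zero_mul]
  · intro h
    simp at h

lemma Cmp_add (F G : PowerSeries ℚ) : Cmp (F + G) = Cmp F + Cmp G := by
  ext m
  simp [coeff_Cmp, add_mul, Finset.sum_add_distrib]

lemma Cmp_onePlusTPow (a : ℚ) : Cmp (onePlusTPow a) = expXT a := by
  ext m
  rw [coeff_Cmp]
  have hm : (Nat.factorial m : ℚ) ≠ 0 := Nat.cast_ne_zero.mpr (Nat.factorial_ne_zero m)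
  have step : ∀ n ∈ range (m+1), coeff n (onePlusTPow a) * coeff m (gg ^ n)
      = (∏ i ∈ range n, (a - i)) * (stirling2 m n : ℚ) / (m.factorial : ℚ) := by
    intro n _
    rw [coeff_onePlusTPow, coeff_gg_pow]
    have hn : (n.factorial : ℚ) ≠ 0 := Nat.cast_ne_zero.mpr (Nat.factorial_ne_zero n)
    field_simp
  rw [Finset.sum_congr rfl step, ← Finset.sum_div, sumB]
  simp [expXT, egf, PowerSeries.coeff_mk]

lemma Cmp_egf (Bh : ℕ → ℚ) :
    Cmp (egf Bh) = egf (fun m => ∑ n ∈ range (m+1), Bh n * (stirling2 m n : ℚ)) := by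
  ext m
  rw [coeff_Cmp]
  have step : ∀ n ∈ range (m+1), coeff n (egf Bh) * coeff m (gg ^ n)
      = Bh n * (stirling2 m n : ℚ) / (m.factorial : ℚ) := by
    intro n _
    rw [coeff_gg_pow]
    have hn : (n.factorial : ℚ) ≠ 0 := Nat.cast_ne_zero.mpr (Nat.factorial_ne_zero n)
    simp only [egf, PowerSeries.coeff_mk]
    field_simp
  rw [Finset.sum_congr rfl step, ← Finset.sum_div]
  simp [egf, PowerSeries.coeff_mk]

lemma coeff_expXT (a : ℚ) (n : ℕ) : coeff n (expXT a) = a ^ n / (n.factorial : ℚ) := by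
  simp [expXT, egf, PowerSeries.coeff_mk]

theorem boole2nd_stirling2_eq_euler (L : ℕ) (hL : 0 < L) (x : ℚ)
    (Bh : ℕ → ℚ) (E : ℕ → ℚ → ℚ)
    (hBh : egf Bh * (1 + (1 + PowerSeries.X) ^ L) = onePlusTPow ((L : ℚ) + x))
    (hE : ∀ y : ℚ, egf (fun m => E m y) * (PowerSeries.exp ℚ + 1) = 2 * expXT y)
    (m : ℕ) :
    ∑ n ∈ Finset.range (m + 1), Bh n * (stirling2 m n : ℚ) =
      ((L : ℚ) ^ m / 2) * E m (((L : ℚ) + x) / L) := by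
  have hL0 : (L : ℚ) ≠ 0 := Nat.cast_ne_zero.mpr hL.ne'
  set y : ℚ := ((L : ℚ) + x) / L with hy
  have hLy : (L : ℚ) * y = (L : ℚ) + x := by
    rw [hy]; field_simp
  -- composed Bh identity
  have hcomp : egf (fun k => ∑ n ∈ range (k+1), Bh n * (stirling2 k n : ℚ)) * (1 + expXT (L : ℚ))
      = expXT ((L : ℚ) + x) := by
    have h := congrArg Cmp hBh
    rw [Cmp_mul, Cmp_add, Cmp_one, onePlusTPow_natCast, Cmp_onePlusTPow, Cmp_onePlusTPow,
      Cmp_egf] at h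
    exact h
  -- rescaled Euler identity
  have hresc : egf (fun k => (L : ℚ) ^ k * E k y) * (1 + expXT (L : ℚ))
      = 2 * expXT ((L : ℚ) + x) := by
    have h := congrArg (rescale (L : ℚ)) (hE y)
    rw [map_mul, map_add, map_one, map_mul] at h
    have r1 : rescale (L : ℚ) (egf fun k => E k y) = egf (fun k => (L : ℚ) ^ k * E k y) := by
      ext n
      simp [PowerSeries.coeff_rescale, egf, PowerSeries.coeff_mk, mul_div_assoc]
    have r2 : rescale (L : ℚ) (exp ℚ) = expXT (L : ℚ) := by
      ext n
      simp [PowerSeries.coeff_rescale, PowerSeries.coeff_exp, coeff_expXT]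
      ring
    have r3 : rescale (L : ℚ) (expXT y) = expXT ((L : ℚ) + x) := by
      ext n
      rw [PowerSeries.coeff_rescale, coeff_expXT, coeff_expXT, ← hLy, mul_pow]
      ring
    have r4 : rescale (L : ℚ) (2 : PowerSeries ℚ) = 2 := by
      rw [show (2 : PowerSeries ℚ) = 1 + 1 from one_add_one_eq_two.symm, map_add, map_one]
    rw [r1, r2, r3, r4, add_comm (expXT (L:ℚ)) 1] at h
    exact h
  -- cancel (1 + expXT L)
  have hne : (1 + expXT (L : ℚ)) ≠ 0 := by
    intro h
    have := congrArg (constantCoeff) h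
    rw [map_add, map_one, map_zero, ← PowerSeries.coeff_zero_eq_constantCoeff_apply,
      coeff_expXT] at this
    norm_num at this
  have hcancel : egf (fun k => (L : ℚ) ^ k * E k y)
      = 2 * egf (fun k => ∑ n ∈ range (k+1), Bh n * (stirling2 k n : ℚ)) := by
    apply mul_right_cancel₀ hne
    rw [hresc, ← hcomp]
    ring
  have hco := congrArg (coeff m) hcancel
  have h2 : (2 : PowerSeries ℚ) = PowerSeries.C 2 := by
    rw [show (2 : ℚ) = 1 + 1 from one_add_one_eq_two.symm, map_add, map_one, one_add_one_eq_two]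
  rw [h2, PowerSeries.coeff_C_mul] at hco
  simp only [egf, PowerSeries.coeff_mk] at hco
  have hm : (Nat.factorial m : ℚ) ≠ 0 := Nat.cast_ne_zero.mpr (Nat.factorial_ne_zero m)
  field_simp at hco
  linarith [hco]
end
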